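/- For every z = x + iy ∈ ℂ with x ≥ 0: |erfc(z)| ≥ e^{y² − x²}/√((1 + √π·x)² + π·y²) ≥ e^{y² − x²}/(1 + √π·|z|), and |erfc(z)| ≤ e^{y² − x²}. -/

import Mathlib

noncomputable section

/-- Complementary error function `erfc(z) = (2/√π) ∫_{t ≥ 0} e^{-(z+t)²} dt`. -/
def erfc (z : ℂ) : ℂ :=
  (2 / Real.sqrt Real.pi : ℂ) * ∫ t in Set.Ici (0 : ℝ), Complex.exp (-(z + (t : ℂ)) ^ 2)

open MeasureTheory Real Complex Set Filter


lemma integrable_F (z : ℂ) : Integrable (fun t : ℝ => Complex.exp (-(z + (t:ℂ)) ^ 2)) := by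
  have h := integrable_cexp_quadratic (b := 1) (by simp) (-2*z) (-z^2)
  refine h.congr (Eventually.of_forall fun t => ?_)
  ring_nf

lemma re_neg_sq (z : ℂ) (t : ℝ) : (-(z + (t:ℂ)) ^ 2).re = z.im^2 - (z.re + t)^2 := by
  simp [pow_two, Complex.mul_re]; try ring

lemma norm_F (z : ℂ) (t : ℝ) :
    ‖Complex.exp (-(z + (t:ℂ)) ^ 2)‖ = Real.exp (z.im^2 - (z.re + t)^2) := by
  rw [Complex.norm_exp, re_neg_sq]

lemma cont_F (z : ℂ) : Continuous (fun t : ℝ => Complex.exp (-(z + (t:ℂ)) ^ 2)) := by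
  fun_prop

lemma integrable_rexp_quad (c : ℝ) : Integrable (fun t : ℝ => Real.exp (c * t - t ^ 2)) := by
  have h : Integrable (fun t : ℝ => Real.exp (-(t - c/2) ^ 2)) := by
    have := (integrable_exp_neg_mul_sq (b := 1) one_pos).comp_sub_right (c/2)
    simpa using this
  have h2 := h.const_mul (Real.exp (c^2/4))
  refine h2.congr (Eventually.of_forall fun t => ?_)
  show Real.exp (c^2/4) * Real.exp (-(t - c/2)^2) = _
  rw [← Real.exp_add]
  congr 1
  ring

lemma hasDerivAt_F (t : ℝ) (w : ℂ) :
    HasDerivAt (fun w : ℂ => Complex.exp (-(w + (t:ℂ)) ^ 2))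
      (Complex.exp (-(w + (t:ℂ)) ^ 2) * (-(2 * (w + (t:ℂ))))) w := by
  have h1 : HasDerivAt (fun w : ℂ => -(w + (t:ℂ)) ^ 2) (-(2 * (w + (t:ℂ)))) w := by
    have := (((hasDerivAt_id w).add_const (t:ℂ)).pow 2).neg
    simpa [Pi.pow_def, Pi.neg_def] using this
  exact h1.cexp

lemma F'_le {R : ℝ} (w : ℂ) (hw : ‖w‖ ≤ R) {t : ℝ} (ht : 0 ≤ t) :
    ‖Complex.exp (-(w + (t:ℂ)) ^ 2) * (-(2 * (w + (t:ℂ))))‖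
      ≤ 2 * Real.exp (R^2 + R) * Real.exp ((2*R+1) * t - t^2) := by
  have hR : 0 ≤ R := le_trans (norm_nonneg w) hw
  rw [norm_mul, norm_F]
  have h1 : ‖-(2 * (w + (t:ℂ)))‖ ≤ 2 * (R + t) := by
    rw [norm_neg, norm_mul]
    have : ‖w + (t:ℂ)‖ ≤ R + t := by
      refine le_trans (norm_add_le _ _) ?_
      rw [Complex.norm_real, Real.norm_eq_abs, _root_.abs_of_nonneg ht]
      linarith
    calc ‖(2:ℂ)‖ * ‖w + (t:ℂ)‖ = 2 * ‖w + (t:ℂ)‖ := by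
          norm_num
      _ ≤ 2 * (R + t) := by linarith [norm_nonneg (w + (t:ℂ))]
  have h2 : w.im^2 - (w.re + t)^2 ≤ R^2 + 2*R*t - t^2 := by
    have hre := Complex.abs_re_le_norm w
    have him := Complex.abs_im_le_norm w
    have h3 : |w.re| ≤ R := le_trans hre hw
    have h4 : |w.im| ≤ R := le_trans him hw
    have h5 : -R ≤ w.re := by cases abs_le.mp h3; linarith
    have h6 : w.im^2 ≤ R^2 := by nlinarith [abs_le.mp h4]
    nlinarith [sq_nonneg w.re, mul_nonneg ht (by linarith : (0:ℝ) ≤ w.re + R)]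
  calc Real.exp (w.im^2 - (w.re + t)^2) * ‖-(2 * (w + (t:ℂ)))‖
      ≤ Real.exp (R^2 + 2*R*t - t^2) * (2 * Real.exp (R + t)) := by
        apply mul_le_mul (Real.exp_le_exp.2 h2) ?_ (norm_nonneg _) (by positivity)
        refine le_trans h1 ?_
        have := Real.add_one_le_exp (R + t)
        nlinarith
    _ = 2 * Real.exp (R^2 + R) * Real.exp ((2*R+1) * t - t^2) := by
        have e := (Real.exp_add (R^2+2*R*t-t^2) (R+t)).symm
        have e2 := Real.exp_add (R^2+R) ((2*R+1)*t - t^2)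
        rw [show R^2+2*R*t-t^2+(R+t) = (R^2+R) + ((2*R+1)*t - t^2) from by ring] at e
        have e3 := e.trans e2
        linear_combination 2 * e3

lemma tendsto_F (z : ℂ) :
    Tendsto (fun t : ℝ => Complex.exp (-(z + (t:ℂ)) ^ 2)) atTop (nhds 0) := by
  rw [tendsto_zero_iff_norm_tendsto_zero]
  have h1 : Tendsto (fun t : ℝ => z.re + t) atTop atTop :=
    tendsto_atTop_add_const_left _ _ tendsto_id
  have h2 : Tendsto (fun t : ℝ => (z.re + t)^2) atTop atTop :=
    (tendsto_pow_atTop (two_ne_zero)).comp h1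
  have h3 : Tendsto (fun t : ℝ => z.im^2 - (z.re + t)^2) atTop atBot :=
    tendsto_atBot_add_const_left _ _ (tendsto_neg_atBot_iff.mpr h2)
  have h4 := Real.tendsto_exp_atBot.comp h3
  refine h4.congr fun t => ?_
  rw [Function.comp_apply, ← norm_F z t]

lemma hasDerivAt_integral (z : ℂ) :
    HasDerivAt (fun w : ℂ => ∫ t in Set.Ici (0:ℝ), Complex.exp (-(w + (t:ℂ)) ^ 2))
      (-Complex.exp (-z ^ 2)) z := by
  set R : ℝ := ‖z‖ + 1 with hR
  have key := hasDerivAt_integral_of_dominated_loc_of_deriv_le (μ := volume.restrict (Set.Ici (0:ℝ)))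
    (F := fun w (t : ℝ) => Complex.exp (-(w + (t:ℂ)) ^ 2))
    (F' := fun w (t : ℝ) => Complex.exp (-(w + (t:ℂ)) ^ 2) * (-(2 * (w + (t:ℂ)))))
    (x₀ := z) (s := Metric.ball z 1) (bound := fun t => 2 * Real.exp (R^2 + R) * Real.exp ((2*R+1) * t - t^2))
    (Metric.ball_mem_nhds z one_pos)
    (Eventually.of_forall fun w => (cont_F w).aestronglyMeasurable.restrict)
    ((integrable_F z).integrableOn)
    (Continuous.aestronglyMeasurable (by fun_prop)).restrict
    ?_ (((integrable_rexp_quad (2*R+1)).const_mul _).integrableOn)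
    (Eventually.of_forall fun t => fun w _ => hasDerivAt_F t w)
  · have hval : (∫ t in Set.Ici (0:ℝ), Complex.exp (-(z + (t:ℂ)) ^ 2) * (-(2 * (z + (t:ℂ)))))
        = -Complex.exp (-z ^ 2) := by
      rw [integral_Ici_eq_integral_Ioi]
      have heq := integral_Ioi_of_hasDerivAt_of_tendsto' (a := (0:ℝ))
        (f := fun t : ℝ => Complex.exp (-(z + (t:ℂ)) ^ 2))
        (f' := fun t : ℝ => Complex.exp (-(z + (t:ℂ)) ^ 2) * (-(2 * (z + (t:ℂ)))))
        (m := 0) ?_ ?_ (tendsto_F z)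
      · rw [heq]; simp
      · intro t _
        have h1 : HasDerivAt (fun t : ℂ => -(z + t) ^ 2) (-(2 * (z + (t:ℂ)))) (t:ℂ) := by
          have := (((hasDerivAt_id ((t:ℝ):ℂ)).const_add z).pow 2).neg
          simpa [Pi.pow_def, Pi.neg_def] using this
        exact (h1.cexp).comp_ofReal
      · have hb : Integrable (fun t : ℝ => 2 * Real.exp (R^2 + R) * Real.exp ((2*R+1) * t - t^2)) :=
          (integrable_rexp_quad (2*R+1)).const_mul _
        refine (hb.integrableOn.mono' (Continuous.aestronglyMeasurable (by fun_prop)).restrict ?_)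
        filter_upwards [ae_restrict_mem measurableSet_Ioi] with t ht
        exact F'_le z (by rw [hR]; linarith) (le_of_lt ht)
    rw [← hval]
    exact key.2
  · filter_upwards [ae_restrict_mem measurableSet_Ici] with t ht w hw
    refine F'_le w ?_ ht
    have hdist : dist w z < 1 := Metric.mem_ball.mp hw
    have : ‖w - z‖ < 1 := by rwa [← Complex.dist_eq]
    calc ‖w‖ = ‖z + (w - z)‖ := by ring_nf
      _ ≤ ‖z‖ + ‖w - z‖ := norm_add_le _ _
      _ ≤ R := by rw [hR]; linarith

lemma sqrt_pi_pos : 0 < Real.sqrt Real.pi := Real.sqrt_pos.mpr Real.pi_pos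

lemma erfc_hasDerivAt (z : ℂ) :
    HasDerivAt erfc (-((2 / Real.sqrt Real.pi : ℂ) * Complex.exp (-z ^ 2))) z := by
  have h := (hasDerivAt_integral z).const_mul (2 / Real.sqrt Real.pi : ℂ)
  exact h.congr_deriv (by ring)

lemma erfc_diff : Differentiable ℂ erfc := fun z => (erfc_hasDerivAt z).differentiableAt

lemma erfc_zero : erfc 0 = 1 := by
  unfold erfc
  have h1 : ∀ t : ℝ, Complex.exp (-((0:ℂ) + (t:ℂ)) ^ 2) = ((Real.exp (-t^2) : ℝ) : ℂ) := by
    intro t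
    rw [Complex.ofReal_exp]
    push_cast
    ring_nf
  simp_rw [h1]
  have h2 : ∫ t in Set.Ici (0:ℝ), Real.exp (-t^2) = Real.sqrt Real.pi / 2 := by
    rw [MeasureTheory.integral_Ici_eq_integral_Ioi]
    have := integral_gaussian_Ioi 1
    simp only [neg_mul, one_mul, div_one] at this
    exact this
  have h3 : (∫ t in Set.Ici (0:ℝ), ((Real.exp (-t^2):ℝ):ℂ))
      = ((Real.sqrt Real.pi / 2 : ℝ) : ℂ) := by
    rw [← h2]
    exact integral_ofReal
  rw [h3]
  have hs : (Real.sqrt Real.pi : ℂ) ≠ 0 := by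
    exact_mod_cast (ne_of_gt sqrt_pi_pos)
  push_cast
  field_simp

lemma erfc_ofReal (x : ℝ) :
    erfc (x : ℂ) = ((2 / Real.sqrt Real.pi * ∫ t in Set.Ici (0:ℝ), Real.exp (-(x + t)^2) : ℝ) : ℂ) := by
  unfold erfc
  have h1 : ∀ t : ℝ, Complex.exp (-((x:ℂ) + (t:ℂ)) ^ 2) = ((Real.exp (-(x+t)^2) : ℝ) : ℂ) := by
    intro t
    rw [Complex.ofReal_exp]
    push_cast
    ring_nf
  simp_rw [h1]
  have h3 : (∫ t in Set.Ici (0:ℝ), ((Real.exp (-(x+t)^2):ℝ):ℂ))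
      = ((∫ t in Set.Ici (0:ℝ), Real.exp (-(x+t)^2) : ℝ) : ℂ) := integral_ofReal
  rw [h3]
  push_cast
  ring

lemma erfc_ofReal_nonneg (x : ℝ) : 0 ≤ (erfc (x:ℂ)).re ∧ (erfc (x:ℂ)).im = 0 := by
  rw [erfc_ofReal]
  constructor
  · rw [Complex.ofReal_re]
    apply mul_nonneg (by positivity)
    apply MeasureTheory.integral_nonneg
    intro t
    positivity
  · rw [Complex.ofReal_im]

lemma gauss_Ici : ∫ t in Set.Ici (0:ℝ), Real.exp (-t^2) = Real.sqrt Real.pi / 2 := by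
  rw [MeasureTheory.integral_Ici_eq_integral_Ioi]
  have := integral_gaussian_Ioi 1
  simp only [neg_mul, one_mul, div_one] at this
  exact this

lemma integrableOn_normF (z : ℂ) :
    IntegrableOn (fun t : ℝ => Real.exp (z.im^2 - (z.re + t)^2)) (Set.Ici (0:ℝ)) := by
  refine ((integrable_F z).norm.integrableOn).congr_fun (fun t _ => ?_) measurableSet_Ici
  exact norm_F z t

lemma norm_erfc_le (z : ℂ) (hx : 0 ≤ z.re) :
    ‖erfc z‖ ≤ Real.exp (z.im^2 - z.re^2) := by
  unfold erfc
  rw [norm_mul]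
  have hc : ‖2 / (Real.sqrt Real.pi : ℂ)‖ = 2 / Real.sqrt Real.pi := by
    rw [norm_div, Complex.norm_two, Complex.norm_real, Real.norm_eq_abs, _root_.abs_of_nonneg (Real.sqrt_nonneg _)]
  rw [hc]
  have h1 : ‖∫ t in Set.Ici (0:ℝ), Complex.exp (-(z + (t:ℂ)) ^ 2)‖
      ≤ ∫ t in Set.Ici (0:ℝ), Real.exp (z.im^2 - (z.re + t)^2) := by
    refine le_trans (norm_integral_le_integral_norm _) (le_of_eq ?_)
    refine integral_congr_ae (Eventually.of_forall fun t => ?_)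
    show ‖cexp (-(z + (t:ℂ)) ^ 2)‖ = _
    rw [norm_F]
  have h2 : ∫ t in Set.Ici (0:ℝ), Real.exp (z.im^2 - (z.re + t)^2)
      ≤ Real.exp (z.im^2 - z.re^2) * (Real.sqrt Real.pi / 2) := by
    have hint2 : IntegrableOn (fun t : ℝ => Real.exp (z.im^2 - z.re^2) * Real.exp (-t^2))
        (Set.Ici (0:ℝ)) := by
      refine (((integrable_exp_neg_mul_sq one_pos).const_mul
        (Real.exp (z.im^2 - z.re^2))).integrableOn).congr_fun (fun t _ => ?_) measurableSet_Ici
      norm_num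
    have hmono := setIntegral_mono_on (integrableOn_normF z) hint2 measurableSet_Ici
      (fun t ht => ?_)
    · refine le_trans hmono (le_of_eq ?_)
      rw [MeasureTheory.integral_const_mul, gauss_Ici]
    · rw [← Real.exp_add]
      apply Real.exp_le_exp.2
      have ht' : (0:ℝ) ≤ t := ht
      nlinarith [mul_nonneg hx ht']
  calc 2 / Real.sqrt Real.pi * ‖∫ t in Set.Ici (0:ℝ), Complex.exp (-(z + (t:ℂ)) ^ 2)‖
      ≤ 2 / Real.sqrt Real.pi * (Real.exp (z.im^2 - z.re^2) * (Real.sqrt Real.pi / 2)) := by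
        apply mul_le_mul_of_nonneg_left (le_trans h1 h2) (by positivity)
    _ = Real.exp (z.im^2 - z.re^2) := by
        field_simp [ne_of_gt sqrt_pi_pos]

lemma hasDerivAt_erfc_I (u : ℝ) :
    HasDerivAt (fun y : ℝ => erfc ((y:ℂ) * I))
      (-((2 / Real.sqrt Real.pi : ℂ) * I * ((Real.exp (u^2) : ℝ) : ℂ))) u := by
  have hinner : HasDerivAt (fun w : ℂ => w * I) I (u:ℂ) := by
    simpa using (hasDerivAt_id ((u:ℝ):ℂ)).mul_const I
  have h := ((erfc_hasDerivAt ((u:ℂ) * I)).comp (u:ℂ) hinner).comp_ofReal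
  refine h.congr_deriv ?_
  have : -((u:ℂ) * I) ^ 2 = ((u^2 : ℝ) : ℂ) := by
    push_cast
    rw [mul_pow, Complex.I_sq]
    ring
  rw [this, Complex.ofReal_exp]
  push_cast
  ring

lemma erfc_mul_I (y : ℝ) :
    erfc ((y:ℂ) * I) = 1 - (2 / Real.sqrt Real.pi : ℂ) * I *
      ((∫ s in (0:ℝ)..y, Real.exp (s^2) : ℝ) : ℂ) := by
  have hftc := intervalIntegral.integral_eq_sub_of_hasDerivAt
    (f := fun y : ℝ => erfc ((y:ℂ) * I))
    (f' := fun u : ℝ => -((2 / Real.sqrt Real.pi : ℂ) * I * ((Real.exp (u^2) : ℝ) : ℂ)))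
    (a := 0) (b := y) (fun u _ => hasDerivAt_erfc_I u) ?_
  · have hval : ∫ u in (0:ℝ)..y, -((2 / Real.sqrt Real.pi : ℂ) * I * ((Real.exp (u^2) : ℝ) : ℂ))
        = -((2 / Real.sqrt Real.pi : ℂ) * I * ((∫ s in (0:ℝ)..y, Real.exp (s^2) : ℝ) : ℂ)) := by
      rw [intervalIntegral.integral_neg]
      congr 1
      rw [intervalIntegral.integral_const_mul]
      congr 1
      exact intervalIntegral.integral_ofReal
    rw [hval] at hftc
    simp only [Complex.ofReal_zero, zero_mul, erfc_zero] at hftc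
    linear_combination -hftc
  · apply Continuous.intervalIntegrable
    fun_prop

lemma key_real (y : ℝ) :
    Real.exp (y^2) ≤ 1 + 2 * y * ∫ s in (0:ℝ)..y, Real.exp (s^2) := by
  have hftc : ∫ s in (0:ℝ)..y, 2 * s * Real.exp (s^2) = Real.exp (y^2) - 1 := by
    have := intervalIntegral.integral_eq_sub_of_hasDerivAt
      (f := fun s : ℝ => Real.exp (s^2)) (f' := fun s : ℝ => 2 * s * Real.exp (s^2))
      (a := 0) (b := y) (fun s _ => ?_) ?_
    · simpa using this
    · have h1 : HasDerivAt (fun s : ℝ => s^2) (2*s) s := by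
        simpa [Pi.pow_def] using (hasDerivAt_id s).pow 2
      have := h1.exp
      refine this.congr_deriv ?_
      ring
    · apply Continuous.intervalIntegrable
      fun_prop
  rcases le_or_gt 0 y with hy | hy
  · have hmono : ∫ s in (0:ℝ)..y, 2 * s * Real.exp (s^2)
        ≤ ∫ s in (0:ℝ)..y, 2 * y * Real.exp (s^2) := by
      apply intervalIntegral.integral_mono_on hy
      · apply Continuous.intervalIntegrable; fun_prop
      · apply Continuous.intervalIntegrable; fun_prop
      · intro s hs
        have h1 : 0 ≤ Real.exp (s^2) := le_of_lt (Real.exp_pos _)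
        nlinarith [hs.1, hs.2]
    rw [hftc, intervalIntegral.integral_const_mul] at hmono
    linarith
  · have hmono : ∫ s in y..(0:ℝ), 2 * y * Real.exp (s^2)
        ≤ ∫ s in y..(0:ℝ), 2 * s * Real.exp (s^2) := by
      apply intervalIntegral.integral_mono_on (le_of_lt hy)
      · apply Continuous.intervalIntegrable; fun_prop
      · apply Continuous.intervalIntegrable; fun_prop
      · intro s hs
        have h1 : 0 ≤ Real.exp (s^2) := le_of_lt (Real.exp_pos _)
        nlinarith [hs.1, hs.2]
    have e1 : ∫ s in y..(0:ℝ), 2 * s * Real.exp (s^2) = -(Real.exp (y^2) - 1) := by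
      rw [intervalIntegral.integral_symm 0 y, hftc]
    have e2 : ∫ s in y..(0:ℝ), 2 * y * Real.exp (s^2)
        = -(2 * y * ∫ s in (0:ℝ)..y, Real.exp (s^2)) := by
      rw [intervalIntegral.integral_symm 0 y, intervalIntegral.integral_const_mul]
    rw [e1, e2] at hmono
    linarith

lemma sq_re (z : ℂ) : (z^2).re = z.re^2 - z.im^2 := by
  simp [pow_two, Complex.mul_re]; try ring

lemma norm_w_le (z : ℂ) (hz : 0 ≤ z.re) :
    ‖Complex.exp (z^2) * erfc z‖ ≤ 1 := by
  rw [norm_mul, Complex.norm_exp, sq_re]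
  calc Real.exp (z.re^2 - z.im^2) * ‖erfc z‖
      ≤ Real.exp (z.re^2 - z.im^2) * Real.exp (z.im^2 - z.re^2) :=
        mul_le_mul_of_nonneg_left (norm_erfc_le z hz) (Real.exp_pos _).le
    _ = 1 := by rw [← Real.exp_add]; simp

/-- The PL auxiliary function. -/
def plfun (z : ℂ) : ℂ :=
  Complex.exp (1 - (1 + (Real.sqrt Real.pi : ℂ) * z) * (Complex.exp (z^2) * erfc z))

lemma norm_plfun (z : ℂ) :
    ‖plfun z‖
      = Real.exp (1 - ((1 + (Real.sqrt Real.pi : ℂ) * z) * (Complex.exp (z^2) * erfc z)).re) := by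
  rw [plfun, Complex.norm_exp]
  simp

lemma plfun_diff : Differentiable ℂ plfun := by
  apply Differentiable.cexp
  apply Differentiable.sub (differentiable_const _)
  apply Differentiable.mul
  · exact (differentiable_const _).add ((differentiable_const _).mul differentiable_id)
  · exact (Differentiable.cexp (differentiable_id.pow 2)).mul erfc_diff

lemma re_key (z : ℂ) (hz : 0 ≤ z.re) :
    1 ≤ ((1 + (Real.sqrt Real.pi : ℂ) * z) * (Complex.exp (z^2) * erfc z)).re := by
  have hpl : ‖plfun z‖ ≤ 1 := by
    apply PhragmenLindelof.right_half_plane_of_bounded_on_real plfun_diff.diffContOnCl ?_ ?_ ?_ hz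
    · -- growth
      refine ⟨1, one_lt_two, Real.sqrt Real.pi + 1, ?_⟩
      rw [Asymptotics.isBigO_iff]
      refine ⟨Real.exp 2, ?_⟩
      rw [Filter.eventually_inf_principal]
      refine Eventually.of_forall fun w hw => ?_
      have hw' : (0:ℝ) ≤ w.re := le_of_lt hw
      rw [norm_plfun]
      have h1 : ((1 + (Real.sqrt Real.pi : ℂ) * w) * (Complex.exp (w^2) * erfc w)).re
          ≥ -(1 + Real.sqrt Real.pi * ‖w‖) := by
        have habs := Complex.abs_re_le_norm ((1 + (Real.sqrt Real.pi : ℂ) * w) * (Complex.exp (w^2) * erfc w))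
        have h2 : ‖(1 + (Real.sqrt Real.pi : ℂ) * w) * (Complex.exp (w^2) * erfc w)‖
            ≤ 1 + Real.sqrt Real.pi * ‖w‖ := by
          rw [norm_mul]
          have h3 : ‖1 + (Real.sqrt Real.pi : ℂ) * w‖ ≤ 1 + Real.sqrt Real.pi * ‖w‖ := by
            refine le_trans (norm_add_le _ _) ?_
            simp [Complex.norm_real, _root_.abs_of_nonneg (Real.sqrt_nonneg _)]
          calc ‖1 + (Real.sqrt Real.pi : ℂ) * w‖ * ‖Complex.exp (w^2) * erfc w‖
              ≤ (1 + Real.sqrt Real.pi * ‖w‖) * 1 := by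
                apply mul_le_mul h3 (norm_w_le w hw') (norm_nonneg _) (by positivity)
            _ = 1 + Real.sqrt Real.pi * ‖w‖ := by ring
        have hna := neg_abs_le (((1 + (Real.sqrt Real.pi : ℂ) * w) * (Complex.exp (w^2) * erfc w)).re)
        linarith
      have h4 : Real.exp (1 - ((1 + (Real.sqrt Real.pi : ℂ) * w) * (Complex.exp (w^2) * erfc w)).re)
          ≤ Real.exp (2 + Real.sqrt Real.pi * ‖w‖) := by
        apply Real.exp_le_exp.2
        linarith
      refine le_trans h4 ?_
      rw [Real.norm_eq_abs, _root_.abs_of_nonneg (Real.exp_pos _).le, ← Real.exp_add]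
      apply Real.exp_le_exp.2
      have : ‖w‖ ^ (1:ℝ) = ‖w‖ := by
        rw [Real.rpow_one]
      rw [this]
      have := norm_nonneg w
      nlinarith [Real.sqrt_nonneg Real.pi]
    · -- bounded on real axis
      apply isBoundedUnder_of_eventually_le (a := Real.exp 1)
      filter_upwards [eventually_ge_atTop (0:ℝ)] with x hx
      rw [norm_plfun]
      apply Real.exp_le_exp.2
      have hre : 0 ≤ ((1 + (Real.sqrt Real.pi : ℂ) * (x:ℂ)) * (Complex.exp ((x:ℂ)^2) * erfc (x:ℂ))).re := by
        obtain ⟨hr, hi⟩ := erfc_ofReal_nonneg x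
        set r := (erfc ((x:ℂ))).re with hrdef
        have herfc : erfc ((x:ℂ)) = ((r:ℝ):ℂ) := by
          apply Complex.ext <;> simp [hi, hrdef]
        rw [herfc]
        have hx2 : ((x:ℂ))^2 = ((x^2 : ℝ) : ℂ) := by push_cast; ring
        rw [hx2, ← Complex.ofReal_exp]
        have hall : (1 + (Real.sqrt Real.pi : ℂ) * (x:ℂ)) * (((Real.exp (x^2) : ℝ):ℂ) * ((r:ℝ):ℂ))
            = (((1 + Real.sqrt Real.pi * x) * (Real.exp (x^2) * r) : ℝ) : ℂ) := by
          push_cast; ring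
        rw [hall, Complex.ofReal_re]
        have h5 : 0 ≤ 1 + Real.sqrt Real.pi * x := by positivity
        positivity
      linarith
    · -- imaginary axis
      intro y
      rw [norm_plfun]
      have : 1 ≤ (((1:ℂ) + (Real.sqrt Real.pi : ℂ) * ((y:ℂ) * I)) * (Complex.exp (((y:ℂ) * I)^2) * erfc ((y:ℂ) * I))).re := by
        set E := ∫ s in (0:ℝ)..y, Real.exp (s^2) with hE
        have hsq : (((y:ℂ)) * I)^2 = ((-(y^2) : ℝ) : ℂ) := by
          rw [mul_pow, Complex.I_sq]; push_cast; ring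
        rw [hsq, ← Complex.ofReal_exp, erfc_mul_I]
        have hs : (Real.sqrt Real.pi : ℂ) ≠ 0 := by
          exact_mod_cast (ne_of_gt sqrt_pi_pos)
        have hprod : ((1:ℂ) + (Real.sqrt Real.pi : ℂ) * ((y:ℂ) * I)) *
              (((Real.exp (-(y^2)) : ℝ):ℂ) * (1 - (2 / Real.sqrt Real.pi : ℂ) * I * ((E:ℝ):ℂ)))
            = (((Real.exp (-(y^2)) * (1 + 2*y*E) : ℝ)):ℂ)
              + (((Real.exp (-(y^2)) * (Real.sqrt Real.pi * y - 2/Real.sqrt Real.pi * E) : ℝ)):ℂ) * I := by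
          have hI : I^2 = -1 := Complex.I_sq
          push_cast
          linear_combination (-2 * (y:ℂ) * Complex.exp (-(y:ℂ)^2) * (E:ℂ)) * hI
            + (-2 * (y:ℂ) * I^2 * Complex.exp (-(y:ℂ)^2) * (E:ℂ)) * mul_inv_cancel₀ hs
        rw [hprod]
        have hre2 : ((((Real.exp (-(y^2)) * (1 + 2*y*E) : ℝ)):ℂ)
              + (((Real.exp (-(y^2)) * (Real.sqrt Real.pi * y - 2/Real.sqrt Real.pi * E) : ℝ)):ℂ) * I).re
            = Real.exp (-(y^2)) * (1 + 2*y*E) := by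
          simp only [Complex.add_re, Complex.mul_re, Complex.mul_im, Complex.ofReal_re,
            Complex.ofReal_im, Complex.I_re, Complex.I_im]
          ring
        rw [hre2]
        have hk := key_real y
        have hpos := Real.exp_pos (-(y^2))
        have hid : Real.exp (-(y^2)) * Real.exp (y^2) = 1 := by
          rw [← Real.exp_add]; simp
        nlinarith [mul_le_mul_of_nonneg_left hk hpos.le]
      have h7 : (1:ℝ) - (((1:ℂ) + (Real.sqrt Real.pi : ℂ) * ((y:ℂ) * I)) *
          (Complex.exp (((y:ℂ) * I)^2) * erfc ((y:ℂ) * I))).re ≤ 0 := by linarith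
      exact (Real.exp_le_exp.2 h7).trans_eq Real.exp_zero
  rw [norm_plfun] at hpl
  have h8 := Real.exp_le_one_iff.mp hpl
  linarith

theorem stmt_17 (z : ℂ) (hx : 0 ≤ z.re) :
    (Real.exp (z.im ^ 2 - z.re ^ 2) /
        Real.sqrt ((1 + Real.sqrt Real.pi * z.re) ^ 2 + Real.pi * z.im ^ 2) ≤
      ‖erfc z‖) ∧
    (Real.exp (z.im ^ 2 - z.re ^ 2) / (1 + Real.sqrt Real.pi * ‖z‖) ≤
      Real.exp (z.im ^ 2 - z.re ^ 2) /
        Real.sqrt ((1 + Real.sqrt Real.pi * z.re) ^ 2 + Real.pi * z.im ^ 2)) ∧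
    ‖erfc z‖ ≤ Real.exp (z.im ^ 2 - z.re ^ 2) := by
  have hs0 : 0 ≤ Real.sqrt Real.pi := Real.sqrt_nonneg _
  have hD : Real.sqrt ((1 + Real.sqrt Real.pi * z.re) ^ 2 + Real.pi * z.im ^ 2)
      = ‖1 + (Real.sqrt Real.pi : ℂ) * z‖ := by
    rw [Complex.norm_def, Complex.normSq_apply]
    congr 1
    have h1 : (1 + (Real.sqrt Real.pi : ℂ) * z).re = 1 + Real.sqrt Real.pi * z.re := by
      simp [Complex.add_re, Complex.mul_re]
    have h2 : (1 + (Real.sqrt Real.pi : ℂ) * z).im = Real.sqrt Real.pi * z.im := by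
      simp [Complex.add_im, Complex.mul_im]
    rw [h1, h2]
    have h3 : Real.sqrt Real.pi * Real.sqrt Real.pi = Real.pi :=
      Real.mul_self_sqrt Real.pi_pos.le
    nlinarith [h3]
  have hD0 : 0 < Real.sqrt ((1 + Real.sqrt Real.pi * z.re) ^ 2 + Real.pi * z.im ^ 2) := by
    apply Real.sqrt_pos.mpr
    nlinarith [mul_nonneg hs0 hx, Real.pi_pos, sq_nonneg z.im, sq_nonneg (Real.sqrt Real.pi * z.im)]
  refine ⟨?_, ?_, norm_erfc_le z hx⟩
  · have hkey := re_key z hx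
    have hchain : 1 ≤ ‖1 + (Real.sqrt Real.pi : ℂ) * z‖
        * (Real.exp (z.re^2 - z.im^2) * ‖erfc z‖) := by
      refine le_trans hkey (le_trans (Complex.re_le_norm _) (le_of_eq ?_))
      rw [norm_mul, norm_mul, Complex.norm_exp, sq_re]
    rw [div_le_iff₀ hD0, hD]
    have hprod : Real.exp (z.im^2 - z.re^2) * Real.exp (z.re^2 - z.im^2) = 1 := by
      rw [← Real.exp_add]; simp
    nlinarith [mul_le_mul_of_nonneg_left hchain (Real.exp_pos (z.im^2 - z.re^2)).le,
      norm_nonneg (erfc z), norm_nonneg (1 + (Real.sqrt Real.pi : ℂ) * z),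
      Real.exp_pos (z.im^2 - z.re^2), Real.exp_pos (z.re^2 - z.im^2)]
  · apply div_le_div_of_nonneg_left (Real.exp_pos _).le hD0
    have habs2 : (‖z‖)^2 = z.re^2 + z.im^2 := by
      rw [Complex.sq_norm, Complex.normSq_apply]; ring
    have hre := Complex.re_le_norm z
    have hzabs : 0 ≤ ‖z‖ := norm_nonneg z
    have h4 : (1 + Real.sqrt Real.pi * z.re) ^ 2 + Real.pi * z.im ^ 2
        ≤ (1 + Real.sqrt Real.pi * ‖z‖)^2 := by
      have h3 : Real.sqrt Real.pi * Real.sqrt Real.pi = Real.pi :=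
        Real.mul_self_sqrt Real.pi_pos.le
      nlinarith [mul_le_mul_of_nonneg_left hre hs0]
    calc Real.sqrt ((1 + Real.sqrt Real.pi * z.re) ^ 2 + Real.pi * z.im ^ 2)
        ≤ Real.sqrt ((1 + Real.sqrt Real.pi * ‖z‖)^2) := Real.sqrt_le_sqrt h4
      _ = 1 + Real.sqrt Real.pi * ‖z‖ := Real.sqrt_sq (by positivity)

end
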